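/- arXiv:1810.12825 — 4 statements merged into one kernel-verified Lean document; each statement's English description precedes it below -/
import Mathlib

section
/- Among all simple undirected graphs on N vertices with L edges where 1 ≤ L < N-1, the incomplete star graph (a star on L+1 vertices plus N-L-1 isolated vertices) has the maximum possible efficiency, namely (L² + 3L)/(4L₀) with L₀ = N(N-1)/2. -/
open Finset

/-- Efficiency `(1/L₀)·Σ_{i<j} 1/d(i,j)`, `L₀ = N(N-1)/2`, with `0`
contribution from disconnected pairs. -/
noncomputable def efficiency {V : Type*} [Fintype V] [DecidableEq V] (G : SimpleGraph V) : ℝ :=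
  (∑ p ∈ Finset.univ.offDiag, ((G.dist p.1 p.2 : ℝ))⁻¹) /
    ((Fintype.card V : ℝ) * ((Fintype.card V : ℝ) - 1))

/-- The incomplete star graph: hub `0` adjacent to leaves `1, …, L`, the
remaining `N - L - 1` vertices isolated. -/
def incompleteStar (N L : ℕ) : SimpleGraph (Fin N) where
  Adj i j := i ≠ j ∧ ((i.val = 0 ∧ j.val ≤ L) ∨ (j.val = 0 ∧ i.val ≤ L))
  symm := by
    constructor
    intro i j h
    exact ⟨h.1.symm, h.2.elim (fun h' => Or.inr h') (fun h' => Or.inl h')⟩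
  loopless := by constructor; intro i h; exact h.1 rfl


section Aux

open SimpleGraph

set_option linter.unusedSectionVars false

variable {V : Type*} [Fintype V] [DecidableEq V]


lemma adjD_card (G : SimpleGraph V) [DecidableRel G.Adj] :
    (univ.offDiag.filter fun p : V × V => G.Adj p.1 p.2).card = 2 * G.edgeFinset.card := by
  rw [← SimpleGraph.dart_card_eq_twice_card_edges]
  rw [← Finset.card_univ, ← Finset.card_image_of_injective univ
    (SimpleGraph.Dart.toProd_injective (G := G))]
  congr 1
  ext p
  simp only [Finset.mem_filter, Finset.mem_image, Finset.mem_univ, true_and, Finset.mem_offDiag]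
  constructor
  · rintro ⟨-, hadj⟩
    exact ⟨⟨p, hadj⟩, rfl⟩
  · rintro ⟨d, rfl⟩
    exact ⟨d.adj.ne, d.adj⟩

lemma exists_pred (G : SimpleGraph V) {r v : V} (h : G.Reachable r v) (hne : v ≠ r) :
    ∃ w, G.Adj v w ∧ G.dist r w + 1 = G.dist r v := by
  have hd : G.dist v r ≠ 0 := by
    rw [SimpleGraph.dist_ne_zero_iff_ne_and_reachable]
    exact ⟨hne, h.symm⟩
  obtain ⟨p, hp⟩ := h.symm.exists_walk_length_eq_dist
  cases p with
  | nil => exact absurd rfl hne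
  | cons hadj q =>
    rename_i w
    refine ⟨w, hadj, ?_⟩
    have h1 : G.dist v r ≤ G.dist w r + 1 := by
      obtain ⟨q', hq'⟩ := (q.reachable).exists_walk_length_eq_dist
      calc G.dist v r ≤ (SimpleGraph.Walk.cons hadj q').length := SimpleGraph.dist_le _
        _ = G.dist w r + 1 := by simp [SimpleGraph.Walk.length_cons, hq']
    have h2 : G.dist w r ≤ q.length := SimpleGraph.dist_le _
    have h3 : q.length + 1 = G.dist v r := by simpa [SimpleGraph.Walk.length_cons] using hp
    have := SimpleGraph.dist_comm (G := G) (u := r) (v := w)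
    have := SimpleGraph.dist_comm (G := G) (u := r) (v := v)
    omega

lemma comp_bound (G : SimpleGraph V) [DecidableRel G.Adj] [DecidableEq G.ConnectedComponent]
    (c : G.ConnectedComponent) :
    2 * ((univ.filter fun v => G.connectedComponentMk v = c).card - 1) ≤
      (univ.offDiag.filter fun p : V × V =>
        G.Adj p.1 p.2 ∧ G.connectedComponentMk p.1 = c).card := by
  classical
  obtain ⟨r, hr⟩ := c.exists_rep
  set s : Finset V := univ.filter fun v => G.connectedComponentMk v = c with hs
  have hr' : G.connectedComponentMk r = c := hr
  have hrs : r ∈ s := by simp [hs, hr']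
  have hreach : ∀ v ∈ s.erase r, G.Reachable r v := by
    intro v hv
    have hv' : G.connectedComponentMk v = c := by
      have := Finset.mem_of_mem_erase hv
      simpa [hs] using this
    exact SimpleGraph.ConnectedComponent.exact (hr.trans hv'.symm)
  -- choose predecessor
  have hex : ∀ v ∈ s.erase r, ∃ w, G.Adj v w ∧ G.dist r w + 1 = G.dist r v := by
    intro v hv
    exact exists_pred G (hreach v hv) (Finset.ne_of_mem_erase hv)
  choose f hf1 hf2 using hex
  -- extend f to a total function
  classical
  let g : V → V := fun v => if h : v ∈ s.erase r then f v h else v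
  have hg1 : ∀ v ∈ s.erase r, G.Adj v (g v) := by
    intro v hv; simp only [g, dif_pos hv]; exact hf1 v hv
  have hg2 : ∀ v ∈ s.erase r, G.dist r (g v) + 1 = G.dist r v := by
    intro v hv; simp only [g, dif_pos hv]; exact hf2 v hv
  set D : Finset (V × V) := univ.offDiag.filter fun p : V × V =>
      G.Adj p.1 p.2 ∧ G.connectedComponentMk p.1 = c with hD
  have hmemD : ∀ p : V × V, G.Adj p.1 p.2 → G.connectedComponentMk p.1 = c → p ∈ D := by
    intro p ha hc
    simp only [hD, Finset.mem_filter, Finset.mem_offDiag, Finset.mem_univ, true_and]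
    exact ⟨ha.ne, ha, hc⟩
  set A : Finset (V × V) := (s.erase r).image (fun v => (v, g v)) with hA
  set B : Finset (V × V) := (s.erase r).image (fun v => (g v, v)) with hB
  have hAD : A ⊆ D := by
    intro p hp
    obtain ⟨v, hv, rfl⟩ := Finset.mem_image.mp hp
    refine hmemD _ (hg1 v hv) ?_
    have := Finset.mem_of_mem_erase hv
    simpa [hs] using this
  have hBD : B ⊆ D := by
    intro p hp
    obtain ⟨v, hv, rfl⟩ := Finset.mem_image.mp hp
    refine hmemD _ (hg1 v hv).symm ?_
    have hvc : G.connectedComponentMk v = c := by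
      have := Finset.mem_of_mem_erase hv
      simpa [hs] using this
    rw [← hvc]
    exact SimpleGraph.ConnectedComponent.connectedComponentMk_eq_of_adj (hg1 v hv).symm
  have hcardA : A.card = (s.erase r).card := by
    rw [hA, Finset.card_image_of_injOn]
    intro a _ b _ hab
    exact congrArg Prod.fst hab
  have hcardB : B.card = (s.erase r).card := by
    rw [hB, Finset.card_image_of_injOn]
    intro a _ b _ hab
    exact congrArg Prod.snd hab
  have hdisj : Disjoint A B := by
    rw [Finset.disjoint_left]
    rintro p hpA hpB
    obtain ⟨v, hv, hveq⟩ := Finset.mem_image.mp hpA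
    obtain ⟨w, hw, hweq⟩ := Finset.mem_image.mp hpB
    have h1 : v = g w := by rw [← hveq] at hweq; exact (congrArg Prod.fst hweq).symm
    have h2 : g v = w := by rw [← hveq] at hweq; exact (congrArg Prod.snd hweq).symm
    have e1 := hg2 v hv
    have e2 := hg2 w hw
    rw [h2] at e1
    rw [← h1] at e2
    omega
  calc 2 * (s.card - 1) = (s.erase r).card + (s.erase r).card := by
        rw [Finset.card_erase_of_mem hrs]; ring
    _ = A.card + B.card := by rw [hcardA, hcardB]
    _ = (A ∪ B).card := (Finset.card_union_of_disjoint hdisj).symm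
    _ ≤ D.card := Finset.card_le_card (Finset.union_subset hAD hBD)

lemma reach_bound (G : SimpleGraph V) [DecidableRel G.Adj] [DecidableRel G.Reachable]
    [DecidableEq G.ConnectedComponent] :
    (univ.offDiag.filter fun p : V × V => G.Reachable p.1 p.2).card ≤
      G.edgeFinset.card * G.edgeFinset.card + G.edgeFinset.card := by
  set R := univ.offDiag.filter (fun p : V × V => G.Reachable p.1 p.2) with hR
  set D := univ.offDiag.filter (fun p : V × V => G.Adj p.1 p.2) with hDdef
  set a : G.ConnectedComponent → ℕ :=
    fun c => (univ.filter fun v => G.connectedComponentMk v = c).card with ha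
  set d : G.ConnectedComponent → ℕ :=
    fun c => (D.filter fun p => G.connectedComponentMk p.1 = c).card with hd
  have hRfib : R.card = ∑ c : G.ConnectedComponent,
      (R.filter fun p => G.connectedComponentMk p.1 = c).card :=
    Finset.card_eq_sum_card_fiberwise (fun p _ => Finset.mem_univ _)
  have hDfib : D.card = ∑ c : G.ConnectedComponent, d c :=
    Finset.card_eq_sum_card_fiberwise (fun p _ => Finset.mem_univ _)
  have hRfiber : ∀ c : G.ConnectedComponent,
      (R.filter fun p => G.connectedComponentMk p.1 = c).card = a c * a c - a c := by
    intro c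
    rw [ha, ← Finset.offDiag_card]
    congr 1
    ext p
    simp only [hR, Finset.mem_filter, Finset.mem_offDiag, Finset.mem_univ, true_and,
      and_assoc]
    constructor
    · rintro ⟨hne, hreach, hc⟩
      exact ⟨hc, (SimpleGraph.ConnectedComponent.sound hreach).symm.trans hc, hne⟩
    · rintro ⟨hc1, hc2, hne⟩
      exact ⟨hne, SimpleGraph.ConnectedComponent.exact (hc1.trans hc2.symm), hc1⟩
  have hcomp : ∀ c : G.ConnectedComponent, 2 * (a c - 1) ≤ d c := by
    intro c
    have := comp_bound G c
    simp only [hd, hDdef, Finset.filter_filter]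
    exact this
  have hkey : ∀ c : G.ConnectedComponent, 4 * (a c * a c - a c) ≤ d c * d c + 2 * d c := by
    intro c
    rcases Nat.eq_zero_or_pos (a c) with h0 | h1
    · simp [h0]
    · obtain ⟨b, hb⟩ : ∃ b, a c = b + 1 := ⟨a c - 1, by omega⟩
      have h2b : 2 * b ≤ d c := by have := hcomp c; omega
      have heq : a c * a c - a c = b * (b + 1) := by
        rw [hb]; have : (b+1)*(b+1) = b*(b+1) + (b+1) := by ring
        omega
      rw [heq]
      nlinarith [Nat.mul_le_mul h2b h2b]
  have hsumsq : ∑ c : G.ConnectedComponent, (d c * d c) ≤ D.card * D.card := by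
    rw [hDfib, Finset.sum_mul]
    refine Finset.sum_le_sum fun c _ => ?_
    exact Nat.mul_le_mul_left _ (Finset.single_le_sum (fun _ _ => Nat.zero_le _)
      (Finset.mem_univ c))
  have hDE : D.card = 2 * G.edgeFinset.card := adjD_card G
  have h4 : 4 * R.card ≤ 4 * (G.edgeFinset.card * G.edgeFinset.card + G.edgeFinset.card) := by
    calc 4 * R.card = ∑ c : G.ConnectedComponent,
          4 * ((R.filter fun p => G.connectedComponentMk p.1 = c).card) := by
          rw [hRfib, Finset.mul_sum]
      _ = ∑ c : G.ConnectedComponent, 4 * (a c * a c - a c) := by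
          refine Finset.sum_congr rfl fun c _ => ?_; rw [hRfiber c]
      _ ≤ ∑ c : G.ConnectedComponent, (d c * d c + 2 * d c) :=
          Finset.sum_le_sum fun c _ => hkey c
      _ = (∑ c : G.ConnectedComponent, d c * d c) + 2 * ∑ c : G.ConnectedComponent, d c := by
          rw [Finset.sum_add_distrib, Finset.mul_sum]
      _ ≤ D.card * D.card + 2 * D.card := by
          rw [← hDfib]; exact Nat.add_le_add_right hsumsq _
      _ = 4 * (G.edgeFinset.card * G.edgeFinset.card + G.edgeFinset.card) := by
          rw [hDE]; ring
  exact Nat.le_of_mul_le_mul_left h4 (by norm_num)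

lemma ncard_edge (G : SimpleGraph V) [DecidableRel G.Adj] :
    G.edgeSet.ncard = G.edgeFinset.card := by
  rw [Set.ncard_eq_toFinset_card']
  exact congrArg Finset.card (by ext; simp)

lemma sum_inv_dist_le (G : SimpleGraph V) [DecidableRel G.Adj] [DecidableRel G.Reachable] :
    ∑ p ∈ univ.offDiag, ((G.dist p.1 p.2 : ℝ))⁻¹ ≤
      ((univ.offDiag.filter fun p : V × V => G.Reachable p.1 p.2).card : ℝ) / 2 +
      ((univ.offDiag.filter fun p : V × V => G.Adj p.1 p.2).card : ℝ) / 2 := by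
  have hle : ∑ p ∈ univ.offDiag, ((G.dist p.1 p.2 : ℝ))⁻¹ ≤
      ∑ p ∈ univ.offDiag, ((if G.Reachable p.1 p.2 then (1:ℝ)/2 else 0) +
        (if G.Adj p.1 p.2 then (1:ℝ)/2 else 0)) := by
    refine Finset.sum_le_sum fun p hp => ?_
    have hne : p.1 ≠ p.2 := (Finset.mem_offDiag.mp hp).2.2
    by_cases hadj : G.Adj p.1 p.2
    · have h1 : G.dist p.1 p.2 = 1 := SimpleGraph.dist_eq_one_iff_adj.mpr hadj
      rw [h1, if_pos hadj, if_pos hadj.reachable]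
      norm_num
    · by_cases hreach : G.Reachable p.1 p.2
      · have h0 : G.dist p.1 p.2 ≠ 0 :=
          SimpleGraph.dist_ne_zero_iff_ne_and_reachable.mpr ⟨hne, hreach⟩
        have h1 : G.dist p.1 p.2 ≠ 1 := fun h => hadj (SimpleGraph.dist_eq_one_iff_adj.mp h)
        have h2 : 2 ≤ G.dist p.1 p.2 := by omega
        rw [if_pos hreach, if_neg hadj]
        have h2' : (2:ℝ) ≤ (G.dist p.1 p.2 : ℝ) := by exact_mod_cast h2
        have := inv_anti₀ (by norm_num : (0:ℝ) < 2) h2'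
        simpa using this.trans_eq (by norm_num)
      · rw [SimpleGraph.dist_eq_zero_of_not_reachable hreach, if_neg hreach, if_neg hadj]
        simp
  refine hle.trans (le_of_eq ?_)
  rw [Finset.sum_add_distrib, ← Finset.sum_filter, ← Finset.sum_filter,
    Finset.sum_const, Finset.sum_const]
  simp only [nsmul_eq_mul]
  ring

instance (N L : ℕ) : DecidableRel (incompleteStar N L).Adj := fun i j =>
  decidable_of_iff (i ≠ j ∧ ((i.val = 0 ∧ j.val ≤ L) ∨ (j.val = 0 ∧ i.val ≤ L))) Iff.rfl

lemma star_reach (N L : ℕ) (hN : L + 2 ≤ N) {i j : Fin N} :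
    (incompleteStar N L).Reachable i j ↔ (i = j ∨ (i.val ≤ L ∧ j.val ≤ L)) := by
  constructor
  · rintro ⟨w⟩
    induction w with
    | nil => exact Or.inl rfl
    | @cons u v x h p ih =>
      have hu : u.val ≤ L ∧ v.val ≤ L := by
        rcases h.2 with ⟨h1, h2⟩ | ⟨h1, h2⟩
        · exact ⟨by omega, h2⟩
        · exact ⟨h2, by omega⟩
      rcases ih with rfl | hx
      · exact Or.inr ⟨hu.1, hu.2⟩
      · exact Or.inr ⟨hu.1, hx.2⟩
  · intro h
    rcases h with rfl | ⟨hi, hj⟩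
    · exact SimpleGraph.Reachable.refl _
    · have hz0 : 0 < N := by omega
      set z : Fin N := ⟨0, hz0⟩ with hzdef
      have hreach : ∀ k : Fin N, k.val ≤ L → (incompleteStar N L).Reachable z k := by
        intro k hk
        by_cases hk0 : k = z
        · rw [hk0]
        · exact (SimpleGraph.Adj.reachable ⟨Ne.symm hk0, Or.inl ⟨rfl, hk⟩⟩)
      exact ((hreach i hi).symm).trans (hreach j hj)

lemma star_edge_card (N L : ℕ) (hN : L + 2 ≤ N) :
    (incompleteStar N L).edgeFinset.card = L := by
  have hz0 : 0 < N := by omega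
  set z : Fin N := ⟨0, hz0⟩ with hzdef
  have hzval : z.val = 0 := rfl
  set T : Finset (Fin N) := univ.filter (fun j => j.val ≠ 0 ∧ j.val ≤ L) with hT
  have hTcard : T.card = L := by
    have h1 : T.card = (Finset.Icc 1 L).card := by
      refine Finset.card_bij (fun a _ => a.val) ?_ ?_ ?_
      · intro a ha
        simp only [hT, Finset.mem_filter, Finset.mem_univ, true_and] at ha
        simp only [Finset.mem_Icc]
        omega
      · intro a _ b _ hab
        exact Fin.ext hab
      · intro b hb
        simp only [Finset.mem_Icc] at hb
        refine ⟨⟨b, by omega⟩, ?_, rfl⟩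
        simp only [hT, Finset.mem_filter, Finset.mem_univ, true_and]
        omega
    rw [h1, Nat.card_Icc]
    omega
  have hbij : T.card = (incompleteStar N L).edgeFinset.card := by
    refine Finset.card_bij (fun j _ => s(z, j)) ?_ ?_ ?_
    · intro a ha
      simp only [hT, Finset.mem_filter, Finset.mem_univ, true_and] at ha
      rw [SimpleGraph.mem_edgeFinset, SimpleGraph.mem_edgeSet]
      refine ⟨fun h => ha.1 ?_, Or.inl ⟨hzval, ha.2⟩⟩
      rw [← h]
    · intro a ha b hb hab
      simp only [hT, Finset.mem_filter, Finset.mem_univ, true_and] at ha hb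
      rw [Sym2.eq_iff] at hab
      rcases hab with ⟨-, h2⟩ | ⟨h1, h2⟩
      · exact h2
      · exact h2.trans h1
    · intro e he
      rw [SimpleGraph.mem_edgeFinset] at he
      induction e with
      | _ a b =>
        rw [SimpleGraph.mem_edgeSet] at he
        obtain ⟨hne, hab⟩ := he
        have hvalne : a.val ≠ b.val := fun h => hne (Fin.ext h)
        rcases hab with ⟨h1, h2⟩ | ⟨h1, h2⟩
        · refine ⟨b, ?_, ?_⟩
          · simp only [hT, Finset.mem_filter, Finset.mem_univ, true_and]
            omega
          · have : a = z := Fin.ext (by rw [h1, hzval])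
            show s(z, b) = s(a, b)
            rw [this]
        · refine ⟨a, ?_, ?_⟩
          · simp only [hT, Finset.mem_filter, Finset.mem_univ, true_and]
            omega
          · have : b = z := Fin.ext (by rw [h1, hzval])
            show s(z, a) = s(a, b)
            rw [this, Sym2.eq_swap]
  rw [← hbij, hTcard]

lemma star_R_card (N L : ℕ) (hN : L + 2 ≤ N) :
    (univ.offDiag.filter fun p : Fin N × Fin N =>
      (incompleteStar N L).Reachable p.1 p.2).card = L * L + L := by
  classical
  have hset : (univ.offDiag.filter fun p : Fin N × Fin N =>
      (incompleteStar N L).Reachable p.1 p.2)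
      = (univ.filter fun v : Fin N => v.val ≤ L).offDiag := by
    ext p
    simp only [Finset.mem_filter, Finset.mem_offDiag, Finset.mem_univ, true_and, and_assoc]
    constructor
    · rintro ⟨hne, hreach⟩
      rcases (star_reach N L hN).mp hreach with heq | ⟨h1, h2⟩
      · exact absurd heq hne
      · exact ⟨h1, h2, hne⟩
    · rintro ⟨h1, h2, hne⟩
      exact ⟨hne, (star_reach N L hN).mpr (Or.inr ⟨h1, h2⟩)⟩
  rw [hset, Finset.offDiag_card]
  have hcard : (univ.filter fun v : Fin N => v.val ≤ L).card = L + 1 := by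
    have h1 : (univ.filter fun v : Fin N => v.val ≤ L).card = (Finset.range (L+1)).card := by
      refine Finset.card_bij (fun a _ => a.val) ?_ ?_ ?_
      · intro a ha
        simp only [Finset.mem_filter, Finset.mem_univ, true_and] at ha
        simp only [Finset.mem_range]; omega
      · intro a _ b _ hab; exact Fin.ext hab
      · intro b hb
        simp only [Finset.mem_range] at hb
        refine ⟨⟨b, by omega⟩, ?_, rfl⟩
        simp only [Finset.mem_filter, Finset.mem_univ, true_and]
        omega
    rw [h1, Finset.card_range]
  rw [hcard]
  have h2 : (L+1)*(L+1) = L*L+L + (L+1) := by ring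
  omega

lemma starSumEval (N L : ℕ) (hN : L + 2 ≤ N) :
    ∑ p ∈ (univ : Finset (Fin N)).offDiag, (((incompleteStar N L).dist p.1 p.2 : ℝ))⁻¹
      = ((L:ℝ)^2 + 3*L)/2 := by
  classical
  have hterm : ∀ p ∈ (univ : Finset (Fin N)).offDiag,
      (((incompleteStar N L).dist p.1 p.2 : ℝ))⁻¹ =
      (if (incompleteStar N L).Reachable p.1 p.2 then (1:ℝ)/2 else 0) +
      (if (incompleteStar N L).Adj p.1 p.2 then (1:ℝ)/2 else 0) := by
    intro p hp
    have hne : p.1 ≠ p.2 := (Finset.mem_offDiag.mp hp).2.2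
    by_cases hadj : (incompleteStar N L).Adj p.1 p.2
    · rw [SimpleGraph.dist_eq_one_iff_adj.mpr hadj, if_pos hadj, if_pos hadj.reachable]
      norm_num
    · by_cases hreach : (incompleteStar N L).Reachable p.1 p.2
      · obtain ⟨h1, h2⟩ : p.1.val ≤ L ∧ p.2.val ≤ L := by
          rcases (star_reach N L hN).mp hreach with heq | h
          · exact absurd heq hne
          · exact h
        set z : Fin N := ⟨0, by omega⟩ with hz
        have hz1 : p.1 ≠ z := by
          intro h
          exact hadj ⟨hne, Or.inl ⟨by rw [h], h2⟩⟩
        have hz2 : p.2 ≠ z := by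
          intro h
          exact hadj ⟨hne, Or.inr ⟨by rw [h], h1⟩⟩
        have ha1 : (incompleteStar N L).Adj p.1 z := ⟨hz1, Or.inr ⟨rfl, h1⟩⟩
        have ha2 : (incompleteStar N L).Adj z p.2 := ⟨Ne.symm hz2, Or.inl ⟨rfl, h2⟩⟩
        have hd2 : (incompleteStar N L).dist p.1 p.2 = 2 := by
          have hub : (incompleteStar N L).dist p.1 p.2 ≤ 2 := by
            have := SimpleGraph.dist_le
              (SimpleGraph.Walk.cons ha1 (SimpleGraph.Walk.cons ha2 SimpleGraph.Walk.nil))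
            simpa using this
          have h0 : (incompleteStar N L).dist p.1 p.2 ≠ 0 :=
            SimpleGraph.dist_ne_zero_iff_ne_and_reachable.mpr ⟨hne, hreach⟩
          have h1' : (incompleteStar N L).dist p.1 p.2 ≠ 1 := fun h =>
            hadj (SimpleGraph.dist_eq_one_iff_adj.mp h)
          omega
        rw [hd2, if_pos hreach, if_neg hadj]
        norm_num
      · rw [SimpleGraph.dist_eq_zero_of_not_reachable hreach, if_neg hreach, if_neg hadj]
        simp
  rw [Finset.sum_congr rfl hterm, Finset.sum_add_distrib, ← Finset.sum_filter,
    ← Finset.sum_filter, Finset.sum_const, Finset.sum_const, star_R_card N L hN,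
    adjD_card (incompleteStar N L), star_edge_card N L hN]
  simp only [nsmul_eq_mul]
  push_cast
  ring


end Aux

theorem stmt_5 (N L : ℕ) (hL1 : 1 ≤ L) (hL2 : L < N - 1) :
    (∀ G : SimpleGraph (Fin N), G.edgeSet.ncard = L →
      efficiency G ≤
        ((L : ℝ) ^ 2 + 3 * (L : ℝ)) / (4 * ((N : ℝ) * ((N : ℝ) - 1) / 2))) ∧
    (incompleteStar N L).edgeSet.ncard = L ∧
    efficiency (incompleteStar N L) =
      ((L : ℝ) ^ 2 + 3 * (L : ℝ)) / (4 * ((N : ℝ) * ((N : ℝ) - 1) / 2)) := by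
  have hN : L + 2 ≤ N := by omega
  have hN3 : 3 ≤ N := by omega
  have hNpos : (0:ℝ) < (N:ℝ) * ((N:ℝ) - 1) := by
    have h3 : (3:ℝ) ≤ (N:ℝ) := by exact_mod_cast hN3
    nlinarith
  have hrhs : ((L : ℝ) ^ 2 + 3 * (L : ℝ)) / (4 * ((N : ℝ) * ((N : ℝ) - 1) / 2))
      = (((L : ℝ) ^ 2 + 3 * (L : ℝ)) / 2) / ((N:ℝ) * ((N:ℝ) - 1)) := by
    field_simp
    ring
  refine ⟨?_, ?_, ?_⟩
  · intro G hG
    haveI : DecidableRel G.Adj := Classical.decRel _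
    haveI : DecidableEq G.ConnectedComponent := Classical.decEq _
    have hE : G.edgeFinset.card = L := by rw [← ncard_edge]; exact hG
    have hR := reach_bound G
    have hD := adjD_card G
    have hS := sum_inv_dist_le G
    rw [hE] at hR hD
    have hnum : ∑ p ∈ univ.offDiag, ((G.dist p.1 p.2 : ℝ))⁻¹ ≤ ((L:ℝ)^2 + 3*L)/2 := by
      refine hS.trans ?_
      have h1 : ((univ.offDiag.filter fun p : Fin N × Fin N =>
          G.Reachable p.1 p.2).card : ℝ) ≤ (L:ℝ)*L + L := by exact_mod_cast hR
      have h2 : ((univ.offDiag.filter fun p : Fin N × Fin N =>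
          G.Adj p.1 p.2).card : ℝ) = 2*L := by exact_mod_cast hD
      rw [h2]
      nlinarith [h1]
    unfold efficiency
    rw [Fintype.card_fin, hrhs]
    exact div_le_div_of_nonneg_right hnum hNpos.le
  · rw [ncard_edge]
    exact star_edge_card N L hN
  · unfold efficiency
    rw [Fintype.card_fin, hrhs, starSumEval N L hN]
end

section
/- Let G be a 'K-set graph' on N vertices: a disjoint union of complete graphs of sizes M₁, ..., M_m with Σᵢ Mᵢ = N, so that L = Σᵢ Mᵢ(Mᵢ-1)/2. Then the efficiency of G equals L/L₀ where L₀ = N(N-1)/2, and this is the smallest efficiency any graph on N vertices with L edges can have. -/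
open Finset

/-- A `K`-set graph: a disjoint union of complete graphs, encoded by a
colouring `c`; two distinct vertices are adjacent iff they have the same
colour.  The cliques are the colour classes, of sizes `M₁, …, M_m` with
`Σᵢ Mᵢ = N` and `L = Σᵢ Mᵢ(Mᵢ-1)/2` edges in total. -/
def kSetGraph (N : ℕ) (c : Fin N → ℕ) : SimpleGraph (Fin N) where
  Adj i j := i ≠ j ∧ c i = c j
  symm := ⟨by intro i j h; exact ⟨h.1.symm, h.2.symm⟩⟩
  loopless := ⟨by intro i h; exact h.1 rfl⟩

lemma kSet_walk_colour {N : ℕ} {c : Fin N → ℕ} {i j : Fin N}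
    (w : (kSetGraph N c).Walk i j) : c i = c j := by
  induction w with
  | nil => rfl
  | cons h w ih => exact h.2.trans ih

open SimpleGraph in
lemma aux_sum_ge {N : ℕ} (G : SimpleGraph (Fin N)) [DecidableRel G.Adj] :
    ((univ.filter fun p : Fin N × Fin N => G.Adj p.1 p.2).card : ℝ) ≤
      ∑ p ∈ Finset.univ.offDiag, ((G.dist p.1 p.2 : ℝ))⁻¹ := by
  classical
  have hsub : (univ.filter fun p : Fin N × Fin N => G.Adj p.1 p.2) ⊆
      (univ.offDiag.filter fun p : Fin N × Fin N => G.Adj p.1 p.2) := by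
    intro p hp
    simp only [mem_filter, mem_offDiag, mem_univ, true_and] at hp ⊢
    exact ⟨hp.ne, hp⟩
  have hcard : (univ.filter fun p : Fin N × Fin N => G.Adj p.1 p.2).card =
      (univ.offDiag.filter fun p : Fin N × Fin N => G.Adj p.1 p.2).card := by
    refine le_antisymm (card_le_card hsub) (card_le_card (filter_subset_filter _ (by intro p _; simp)))
  rw [hcard]
  calc ((univ.offDiag.filter fun p : Fin N × Fin N => G.Adj p.1 p.2).card : ℝ)
      = ∑ p ∈ univ.offDiag, (if G.Adj p.1 p.2 then (1:ℝ) else 0) := by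
        rw [Finset.sum_boole]
    _ ≤ ∑ p ∈ Finset.univ.offDiag, ((G.dist p.1 p.2 : ℝ))⁻¹ := by
        apply Finset.sum_le_sum
        intro p _
        split_ifs with h
        · rw [(SimpleGraph.dist_eq_one_iff_adj).2 h]; norm_num
        · positivity

theorem stmt_8 (N L : ℕ) (hN : 2 ≤ N) (c : Fin N → ℕ)
    (hL : (kSetGraph N c).edgeSet.ncard = L) :
    efficiency (kSetGraph N c) = (L : ℝ) / ((N : ℝ) * ((N : ℝ) - 1) / 2) ∧
    ∀ G : SimpleGraph (Fin N), G.edgeSet.ncard = L →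
      (L : ℝ) / ((N : ℝ) * ((N : ℝ) - 1) / 2) ≤ efficiency G := by
  classical
  have hNpos : (0:ℝ) < (N : ℝ) * ((N : ℝ) - 1) := by
    have : (2:ℝ) ≤ (N:ℝ) := by exact_mod_cast hN
    nlinarith
  have hcardNL : ∀ (G : SimpleGraph (Fin N)) [DecidableRel G.Adj], G.edgeSet.ncard = L →
      ((univ.filter fun p : Fin N × Fin N => G.Adj p.1 p.2).card) = 2 * L := by
    intro G _ hGL
    rw [← SimpleGraph.two_mul_card_edgeFinset]
    rw [← hGL, Set.ncard_eq_toFinset_card', SimpleGraph.edgeFinset]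
  constructor
  · -- exact value for the K-set graph
    have hdist : ∀ p ∈ (univ : Finset (Fin N)).offDiag,
        (((kSetGraph N c).dist p.1 p.2 : ℝ))⁻¹ =
          (if (kSetGraph N c).Adj p.1 p.2 then (1:ℝ) else 0) := by
      intro p hp
      rw [mem_offDiag] at hp
      split_ifs with h
      · rw [(SimpleGraph.dist_eq_one_iff_adj).2 h]; norm_num
      · have hur : ¬ (kSetGraph N c).Reachable p.1 p.2 := by
          intro hr
          rcases hr with ⟨w⟩
          exact h ⟨hp.2.2, kSet_walk_colour w⟩
        rw [SimpleGraph.dist_eq_zero_of_not_reachable hur]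
        norm_num
    have hsum : (∑ p ∈ Finset.univ.offDiag, (((kSetGraph N c).dist p.1 p.2 : ℝ))⁻¹)
        = ((univ.filter fun p : Fin N × Fin N => (kSetGraph N c).Adj p.1 p.2).card : ℝ) := by
      rw [Finset.sum_congr rfl hdist, Finset.sum_boole]
      congr 1
      refine le_antisymm (card_le_card (filter_subset_filter _ (by intro p _; simp)))
        (card_le_card ?_)
      intro p hp
      simp only [mem_filter, mem_offDiag, mem_univ, true_and] at hp ⊢
      exact ⟨hp.ne, hp⟩
    rw [efficiency, hsum, hcardNL _ hL]
    simp only [Fintype.card_fin]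
    push_cast
    field_simp
  · intro G hGL
    have h2 := aux_sum_ge G
    rw [hcardNL G hGL] at h2
    rw [efficiency]
    simp only [Fintype.card_fin]
    rw [div_le_div_iff₀ (by positivity) hNpos]
    push_cast at h2 ⊢
    nlinarith [h2]
end

section
/- Let G be an ultra-long graph on N vertices with L edges, composed of a complete subgraph of size N_c, a path (tail) of N_t = N - N_c vertices, and L_e ≥ 1 edges joining the first tail vertex to L_e vertices of the clique, where L_c = N_c(N_c-1)/2 and L = L_c + (N_t - 1) + L_e. Then the average pathlength of G equals (1/L₀)·[L_c - N_t(L - N) + (N³ - N_c³ - 7N_t)/6], where L₀ = N(N-1)/2. -/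
open Finset

/-- Average shortest-path length `(1/L₀)·Σ_{i<j} d(i,j)`, `L₀ = N(N-1)/2`,
written as the sum over ordered pairs divided by `N(N-1)`. -/
noncomputable def avgPathLen {V : Type*} [Fintype V] [DecidableEq V] (G : SimpleGraph V) : ℝ :=
  (∑ p ∈ Finset.univ.offDiag, (G.dist p.1 p.2 : ℝ)) /
    ((Fintype.card V : ℝ) * ((Fintype.card V : ℝ) - 1))

/-- An ultra-long graph: a complete graph on the vertices `0, …, N_c-1`, a path
(the tail) on the vertices `N_c, …, N-1`, and `L_e` edges joining the first
tail vertex `N_c` to the clique vertices `0, …, L_e-1`. -/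
def ultraLongGraph (N Nc Le : ℕ) : SimpleGraph (Fin N) where
  Adj i j := i ≠ j ∧
    ((i.val < Nc ∧ j.val < Nc) ∨
     (Nc ≤ i.val ∧ j.val = i.val + 1) ∨
     (Nc ≤ j.val ∧ i.val = j.val + 1) ∨
     (i.val < Le ∧ j.val = Nc) ∨
     (j.val < Le ∧ i.val = Nc))
  symm := by
    constructor
    intro i j h
    refine ⟨h.1.symm, ?_⟩
    rcases h.2 with h' | h' | h' | h' | h'
    · exact Or.inl ⟨h'.2, h'.1⟩
    · exact Or.inr (Or.inr (Or.inl h'))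
    · exact Or.inr (Or.inl h')
    · exact Or.inr (Or.inr (Or.inr (Or.inr h')))
    · exact Or.inr (Or.inr (Or.inr (Or.inl h')))
  loopless := by constructor; intro i h; exact h.1 rfl

open SimpleGraph

section Aux

variable {V : Type*}

lemma walk_lipschitz {G : SimpleGraph V} (f : V → ℤ)
    (hf : ∀ u v, G.Adj u v → |f u - f v| ≤ 1) :
    ∀ {u v : V} (p : G.Walk u v), |f u - f v| ≤ p.length := by
  intro u v p
  induction p with
  | nil => simp
  | @cons a b c h p ih =>
      have h1 := hf a b h
      calc |f a - f c| ≤ |f a - f b| + |f b - f c| := abs_sub_le _ _ _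
        _ ≤ 1 + p.length := by push_cast; exact add_le_add h1 ih
        _ = ((SimpleGraph.Walk.cons h p).length : ℤ) := by simp; ring

lemma dist_lipschitz {G : SimpleGraph V} (f : V → ℤ)
    (hf : ∀ u v, G.Adj u v → |f u - f v| ≤ 1) {u v : V} (hr : G.Reachable u v) :
    |f u - f v| ≤ G.dist u v := by
  obtain ⟨p, hp⟩ := hr.exists_walk_length_eq_dist
  rw [← hp]; exact walk_lipschitz f hf p

end Aux

section ULG

variable {N Nc Le : ℕ}

lemma ulg_adj_clique {i j : Fin N} (hne : i ≠ j) (hi : i.val < Nc) (hj : j.val < Nc) :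
    (ultraLongGraph N Nc Le).Adj i j := ⟨hne, Or.inl ⟨hi, hj⟩⟩

lemma ulg_adj_tail {i j : Fin N} (hi : Nc ≤ i.val) (hj : j.val = i.val + 1) :
    (ultraLongGraph N Nc Le).Adj i j :=
  ⟨by intro h; subst h; omega, Or.inr (Or.inl ⟨hi, hj⟩)⟩

lemma ulg_adj_conn (hLe2 : Le ≤ Nc) {i j : Fin N} (hi : i.val < Le) (hj : j.val = Nc) :
    (ultraLongGraph N Nc Le).Adj i j :=
  ⟨by intro h; subst h; omega, Or.inr (Or.inr (Or.inr (Or.inl ⟨hi, hj⟩)))⟩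

lemma ulg_tail_walk (t : ℕ) : ∀ (a : ℕ) (h1 : Nc + a < N) (h2 : Nc + a + t < N),
    ∃ p : (ultraLongGraph N Nc Le).Walk ⟨Nc + a, h1⟩ ⟨Nc + a + t, h2⟩, p.length = t := by
  induction t with
  | zero => intro a h1 h2; exact ⟨SimpleGraph.Walk.nil, rfl⟩
  | succ t ih =>
      intro a h1 h2
      obtain ⟨p, hp⟩ := ih (a + 1) (by omega) (by omega)
      refine ⟨SimpleGraph.Walk.cons (ulg_adj_tail (by simp) (by simp; omega))
        (p.copy rfl (Fin.ext (by simp; omega))), by simp [hp]⟩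

lemma ulg_dist_tail_le (a t : ℕ) (h1 : Nc + a < N) (h2 : Nc + a + t < N) :
    (ultraLongGraph N Nc Le).dist ⟨Nc + a, h1⟩ ⟨Nc + a + t, h2⟩ ≤ t := by
  obtain ⟨p, hp⟩ := ulg_tail_walk (N := N) (Nc := Nc) (Le := Le) t a h1 h2
  exact le_trans (SimpleGraph.dist_le p) (le_of_eq hp)

lemma ulg_connected (hNc : Nc < N) (hLe1 : 1 ≤ Le) (hLe2 : Le ≤ Nc) :
    (ultraLongGraph N Nc Le).Connected := by
  have h0 : (0 : ℕ) < N := by omega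
  rw [SimpleGraph.connected_iff_exists_forall_reachable]
  refine ⟨⟨0, h0⟩, fun v => ?_⟩
  have hNcN : Nc < N := hNc
  by_cases hv : v.val < Nc
  · by_cases h : v = ⟨0, h0⟩
    · exact h ▸ SimpleGraph.Reachable.refl _
    · exact (ulg_adj_clique (Ne.symm h) (by simp; omega) hv).reachable
  · push_neg at hv
    have hr1 : (ultraLongGraph N Nc Le).Reachable ⟨0, h0⟩ ⟨Nc, hNcN⟩ :=
      (ulg_adj_conn hLe2 (by simp; omega) (by simp)).reachable
    have hv2 : v = ⟨Nc + 0 + (v.val - Nc), by omega⟩ := Fin.ext (by simp; omega)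
    rw [hv2]
    obtain ⟨p, -⟩ := ulg_tail_walk (N := N) (Nc := Nc) (Le := Le) (v.val - Nc) 0 (by omega) (by omega)
    exact hr1.trans p.reachable

end ULG

section Dist

variable {N Nc Le : ℕ}

lemma f1_lip (hLe2 : Le ≤ Nc) : ∀ u v : Fin N, (ultraLongGraph N Nc Le).Adj u v →
    |(if u.val < Nc then (Nc : ℤ) else u.val) - (if v.val < Nc then (Nc : ℤ) else v.val)| ≤ 1 := by
  intro u v ⟨hne, hc⟩
  rw [abs_le]
  rcases hc with ⟨h1, h2⟩ | ⟨h1, h2⟩ | ⟨h1, h2⟩ | ⟨h1, h2⟩ | ⟨h1, h2⟩ <;>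
    split_ifs <;> constructor <;> omega

lemma f2_lip (hLe2 : Le ≤ Nc) : ∀ u v : Fin N, (ultraLongGraph N Nc Le).Adj u v →
    |(if u.val < Nc then 0 else (u.val : ℤ) - Nc + 1) -
      (if v.val < Nc then 0 else (v.val : ℤ) - Nc + 1)| ≤ 1 := by
  intro u v ⟨hne, hc⟩
  rw [abs_le]
  rcases hc with ⟨h1, h2⟩ | ⟨h1, h2⟩ | ⟨h1, h2⟩ | ⟨h1, h2⟩ | ⟨h1, h2⟩ <;>
    split_ifs <;> constructor <;> omega

lemma f3_lip (hLe2 : Le ≤ Nc) : ∀ u v : Fin N, (ultraLongGraph N Nc Le).Adj u v →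
    |(if u.val < Le then 0 else if u.val < Nc then 1 else -((u.val : ℤ) - Nc + 1)) -
      (if v.val < Le then 0 else if v.val < Nc then 1 else -((v.val : ℤ) - Nc + 1))| ≤ 1 := by
  intro u v ⟨hne, hc⟩
  rw [abs_le]
  rcases hc with ⟨h1, h2⟩ | ⟨h1, h2⟩ | ⟨h1, h2⟩ | ⟨h1, h2⟩ | ⟨h1, h2⟩ <;>
    split_ifs <;> constructor <;> omega

lemma ulg_dist_clique_tail (hNc : Nc < N) (hLe1 : 1 ≤ Le) (hLe2 : Le ≤ Nc)
    {u v : Fin N} (hu : u.val < Nc) (hv : Nc ≤ v.val) :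
    (ultraLongGraph N Nc Le).dist u v =
      v.val - Nc + 1 + (if u.val < Le then 0 else 1) := by
  have hconn := ulg_connected (N := N) (Nc := Nc) (Le := Le) hNc hLe1 hLe2
  have h0 : (0 : ℕ) < N := by omega
  -- distance from ⟨Nc⟩ to v
  have hdNc : (ultraLongGraph N Nc Le).dist ⟨Nc, hNc⟩ v ≤ v.val - Nc := by
    have h' := ulg_dist_tail_le (N := N) (Nc := Nc) (Le := Le) 0 (v.val - Nc)
      (by omega) (by omega)
    have e : (⟨Nc + 0 + (v.val - Nc), by omega⟩ : Fin N) = v := Fin.ext (by simp; omega)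
    rw [e] at h'
    exact h'
  by_cases hle : u.val < Le
  · have hub : (ultraLongGraph N Nc Le).dist u v ≤ 1 + (v.val - Nc) := by
      calc (ultraLongGraph N Nc Le).dist u v
          ≤ (ultraLongGraph N Nc Le).dist u ⟨Nc, hNc⟩ +
            (ultraLongGraph N Nc Le).dist ⟨Nc, hNc⟩ v := hconn.dist_triangle
        _ ≤ 1 + (v.val - Nc) := by
            have : (ultraLongGraph N Nc Le).dist u ⟨Nc, hNc⟩ = 1 :=
              SimpleGraph.dist_eq_one_iff_adj.mpr (ulg_adj_conn hLe2 hle rfl)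
            omega
    have hlb := dist_lipschitz _ (f2_lip (N := N) hLe2) (hconn u v)
    rw [if_pos hu, if_neg (by omega)] at hlb
    rw [zero_sub, abs_neg, abs_of_nonneg (by push_cast; omega)] at hlb
    rw [if_pos hle]
    omega
  · push_neg at hle
    have hu0 : (ultraLongGraph N Nc Le).dist u ⟨0, h0⟩ = 1 :=
      SimpleGraph.dist_eq_one_iff_adj.mpr
        (ulg_adj_clique (by intro h; apply_fun Fin.val at h; simp at h; omega) hu (by simp; omega))
    have h0Nc : (ultraLongGraph N Nc Le).dist ⟨0, h0⟩ ⟨Nc, hNc⟩ = 1 :=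
      SimpleGraph.dist_eq_one_iff_adj.mpr (ulg_adj_conn hLe2 (by show 0 < Le; omega) rfl)
    have hub : (ultraLongGraph N Nc Le).dist u v ≤ 2 + (v.val - Nc) := by
      calc (ultraLongGraph N Nc Le).dist u v
          ≤ (ultraLongGraph N Nc Le).dist u ⟨0, h0⟩ +
            (ultraLongGraph N Nc Le).dist ⟨0, h0⟩ v := hconn.dist_triangle
        _ ≤ (ultraLongGraph N Nc Le).dist u ⟨0, h0⟩ +
            ((ultraLongGraph N Nc Le).dist ⟨0, h0⟩ ⟨Nc, hNc⟩ +
              (ultraLongGraph N Nc Le).dist ⟨Nc, hNc⟩ v) :=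
            Nat.add_le_add_left hconn.dist_triangle _
        _ ≤ 2 + (v.val - Nc) := by omega
    have hlb := dist_lipschitz _ (f3_lip (N := N) hLe2) (hconn u v)
    rw [if_neg (by omega), if_pos hu, if_neg (by omega), if_neg (by omega)] at hlb
    rw [sub_neg_eq_add, abs_of_nonneg (by push_cast; omega)] at hlb
    rw [if_neg (by omega)]
    omega

lemma ulg_dist_tail_tail (hNc : Nc < N) (hLe1 : 1 ≤ Le) (hLe2 : Le ≤ Nc)
    {u v : Fin N} (hu : Nc ≤ u.val) (hv : Nc ≤ v.val) (huv : u.val ≤ v.val) :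
    (ultraLongGraph N Nc Le).dist u v = v.val - u.val := by
  have hconn := ulg_connected (N := N) (Nc := Nc) (Le := Le) hNc hLe1 hLe2
  have hub : (ultraLongGraph N Nc Le).dist u v ≤ v.val - u.val := by
    have h' := ulg_dist_tail_le (N := N) (Nc := Nc) (Le := Le) (u.val - Nc) (v.val - u.val)
      (by omega) (by omega)
    have e1 : (⟨Nc + (u.val - Nc), by omega⟩ : Fin N) = u := Fin.ext (by simp; omega)
    have e2 : (⟨Nc + (u.val - Nc) + (v.val - u.val), by omega⟩ : Fin N) = v :=
      Fin.ext (by simp; omega)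
    rw [e1, e2] at h'
    exact h'
  have hlb := dist_lipschitz _ (f1_lip (N := N) hLe2) (hconn u v)
  rw [if_neg (by omega), if_neg (by omega)] at hlb
  rw [abs_sub_comm, abs_of_nonneg (by push_cast; omega)] at hlb
  omega

lemma ulg_dist_eq (hNc : Nc < N) (hLe1 : 1 ≤ Le) (hLe2 : Le ≤ Nc) (u v : Fin N) :
    (ultraLongGraph N Nc Le).dist u v =
      if u = v then 0
      else if u.val < Nc then
        (if v.val < Nc then 1 else v.val - Nc + 1 + (if u.val < Le then 0 else 1))
      else if v.val < Nc then u.val - Nc + 1 + (if v.val < Le then 0 else 1)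
      else max u.val v.val - min u.val v.val := by
  by_cases h1 : u = v
  · rw [if_pos h1, h1, SimpleGraph.dist_self]
  rw [if_neg h1]
  by_cases h2 : u.val < Nc
  · rw [if_pos h2]
    by_cases h3 : v.val < Nc
    · rw [if_pos h3]
      exact SimpleGraph.dist_eq_one_iff_adj.mpr (ulg_adj_clique h1 h2 h3)
    · rw [if_neg h3]
      exact ulg_dist_clique_tail (u := u) (v := v) hNc hLe1 hLe2 h2 (by omega)
  · rw [if_neg h2]
    by_cases h3 : v.val < Nc
    · rw [if_pos h3, SimpleGraph.dist_comm]
      exact ulg_dist_clique_tail (u := v) (v := u) hNc hLe1 hLe2 h3 (by omega)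
    · rw [if_neg h3]
      rcases le_total u.val v.val with h | h
      · rw [ulg_dist_tail_tail hNc hLe1 hLe2 (by omega) (by omega) h]
        omega
      · rw [SimpleGraph.dist_comm, ulg_dist_tail_tail hNc hLe1 hLe2 (by omega) (by omega) h]
        omega

end Dist

section Sums

open Finset

lemma sum_id_real (n : ℕ) : ∑ i ∈ range n, (i : ℝ) = n * (n - 1) / 2 := by
  induction n with
  | zero => simp
  | succ n ih =>
      rw [Finset.sum_range_succ, ih]
      push_cast
      ring

lemma sum_absdiff_real (n : ℕ) :
    ∑ a ∈ range n, ∑ b ∈ range n, ((max a b - min a b : ℕ) : ℝ) =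
      n * (n - 1) * (n + 1) / 3 := by
  induction n with
  | zero => simp
  | succ n ih =>
      rw [Finset.sum_range_succ]
      have h1 : ∀ a ∈ range n, ∑ b ∈ range (n + 1), ((max a b - min a b : ℕ) : ℝ) =
          (∑ b ∈ range n, ((max a b - min a b : ℕ) : ℝ)) + ((n : ℝ) - a) := by
        intro a ha
        rw [Finset.sum_range_succ]
        rw [mem_range] at ha
        congr 1
        rw [max_eq_right (by omega), min_eq_left (by omega)]
        push_cast [Nat.cast_sub (by omega : a ≤ n)]
        ring
      rw [Finset.sum_congr rfl h1, Finset.sum_add_distrib, ih]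
      have h2 : ∑ b ∈ range (n + 1), ((max n b - min n b : ℕ) : ℝ) =
          ∑ b ∈ range n, ((n : ℝ) - b) := by
        rw [Finset.sum_range_succ]
        simp only [max_self, min_self, Nat.sub_self, Nat.cast_zero, add_zero]
        refine Finset.sum_congr rfl fun b hb => ?_
        rw [mem_range] at hb
        rw [max_eq_left (by omega), min_eq_right (by omega)]
        push_cast [Nat.cast_sub (by omega : b ≤ n)]
        ring
      rw [h2]
      have h3 : ∑ b ∈ range n, ((n : ℝ) - b) = n * n - n * (n - 1) / 2 := by
        rw [Finset.sum_sub_distrib, Finset.sum_const, card_range, sum_id_real,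
          nsmul_eq_mul]
      have h4 : ∑ a ∈ range n, ((n : ℝ) - a) = n * n - n * (n - 1) / 2 := by
        rw [Finset.sum_sub_distrib, Finset.sum_const, card_range, sum_id_real,
          nsmul_eq_mul]
      rw [h3]
      push_cast
      ring

lemma sum_indicator_real (Le Nc : ℕ) (hLe : Le ≤ Nc) :
    ∑ i ∈ range Nc, (if i < Le then (0 : ℝ) else 1) = Nc - Le := by
  rw [Finset.range_eq_Ico, ← Finset.sum_Ico_consecutive _ (Nat.zero_le Le) hLe]
  have e1 : ∑ i ∈ Finset.Ico 0 Le, (if i < Le then (0 : ℝ) else 1) = 0 :=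
    Finset.sum_eq_zero (fun i hi => by rw [Finset.mem_Ico] at hi; rw [if_pos hi.2])
  have e2 : ∑ i ∈ Finset.Ico Le Nc, (if i < Le then (0 : ℝ) else 1) = ((Nc - Le : ℕ) : ℝ) := by
    calc ∑ i ∈ Finset.Ico Le Nc, (if i < Le then (0 : ℝ) else 1)
        = ∑ _i ∈ Finset.Ico Le Nc, (1 : ℝ) :=
          Finset.sum_congr rfl (fun i hi => by
            rw [Finset.mem_Ico] at hi; rw [if_neg (by omega)])
      _ = ((Nc - Le : ℕ) : ℝ) := by rw [Finset.sum_const, Nat.card_Ico, nsmul_eq_mul, mul_one]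
  rw [e1, e2, Nat.cast_sub hLe, zero_add]

end Sums

def Dn (Nc Le i j : ℕ) : ℕ :=
  if i = j then 0
  else if i < Nc then
    (if j < Nc then 1 else j - Nc + 1 + (if i < Le then 0 else 1))
  else if j < Nc then i - Nc + 1 + (if j < Le then 0 else 1)
  else max i j - min i j

lemma Dn_symm (Nc Le i j : ℕ) : Dn Nc Le i j = Dn Nc Le j i := by
  simp only [Dn]
  split_ifs <;> omega

section Blocks

open Finset

variable {N Nc Le : ℕ}

lemma blockA : ∑ i ∈ Ico 0 Nc, ∑ j ∈ Ico 0 Nc, (Dn Nc Le i j : ℝ) =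
    Nc * ((Nc : ℝ) - 1) := by
  have inner : ∀ i ∈ Ico 0 Nc, ∑ j ∈ Ico 0 Nc, (Dn Nc Le i j : ℝ) = (Nc : ℝ) - 1 := by
    intro i hi
    rw [mem_Ico] at hi
    have e : ∀ j ∈ Ico 0 Nc, (Dn Nc Le i j : ℝ) = 1 - (if i = j then (1 : ℝ) else 0) := by
      intro j hj
      rw [mem_Ico] at hj
      by_cases h : i = j
      · simp [Dn, h]
      · simp [Dn, h, hi.2, hj.2]
    rw [Finset.sum_congr rfl e, Finset.sum_sub_distrib, Finset.sum_const,
      Finset.sum_ite_eq, if_pos (by rw [mem_Ico]; omega), Nat.card_Ico]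
    simp
  rw [Finset.sum_congr rfl inner, Finset.sum_const, Nat.card_Ico]
  simp [nsmul_eq_mul]

lemma blockB (hNc : Nc < N) (hLe2 : Le ≤ Nc) :
    ∑ i ∈ Ico 0 Nc, ∑ j ∈ Ico Nc N, (Dn Nc Le i j : ℝ) =
      (Nc : ℝ) * (((N - Nc : ℕ) : ℝ) * (((N - Nc : ℕ) : ℝ) + 1) / 2) +
        ((N - Nc : ℕ) : ℝ) * ((Nc : ℝ) - (Le : ℝ)) := by
  have tailsum : ∑ j ∈ Ico Nc N, ((j : ℝ) - Nc + 1) =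
      ((N - Nc : ℕ) : ℝ) * (((N - Nc : ℕ) : ℝ) + 1) / 2 := by
    rw [Finset.sum_Ico_eq_sum_range]
    have e : ∀ t ∈ range (N - Nc), ((Nc + t : ℕ) : ℝ) - Nc + 1 = (t : ℝ) + 1 := by
      intro t ht; push_cast; ring
    rw [Finset.sum_congr rfl e, Finset.sum_add_distrib, sum_id_real, Finset.sum_const,
      card_range, nsmul_eq_mul, mul_one]
    ring
  have inner : ∀ i ∈ Ico 0 Nc, ∑ j ∈ Ico Nc N, (Dn Nc Le i j : ℝ) =
      ((N - Nc : ℕ) : ℝ) * (((N - Nc : ℕ) : ℝ) + 1) / 2 +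
        ((N - Nc : ℕ) : ℝ) * (if i < Le then (0 : ℝ) else 1) := by
    intro i hi
    rw [mem_Ico] at hi
    have e : ∀ j ∈ Ico Nc N, (Dn Nc Le i j : ℝ) =
        ((j : ℝ) - Nc + 1) + (if i < Le then (0 : ℝ) else 1) := by
      intro j hj
      rw [mem_Ico] at hj
      have hij : i ≠ j := by omega
      simp only [Dn, if_neg hij, if_pos hi.2, if_neg (by omega : ¬ j < Nc)]
      split_ifs with h <;> push_cast [Nat.cast_sub (by omega : Nc ≤ j)] <;> ring
    rw [Finset.sum_congr rfl e, Finset.sum_add_distrib, tailsum, Finset.sum_const,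
      Nat.card_Ico, nsmul_eq_mul]
  rw [Finset.sum_congr rfl inner, Finset.sum_add_distrib, Finset.sum_const, Nat.card_Ico,
    nsmul_eq_mul, ← Finset.mul_sum, ← Finset.range_eq_Ico, sum_indicator_real Le Nc hLe2]
  simp only [Nat.sub_zero]

lemma blockC (hNc : Nc < N) (hLe2 : Le ≤ Nc) :
    ∑ i ∈ Ico Nc N, ∑ j ∈ Ico 0 Nc, (Dn Nc Le i j : ℝ) =
      (Nc : ℝ) * (((N - Nc : ℕ) : ℝ) * (((N - Nc : ℕ) : ℝ) + 1) / 2) +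
        ((N - Nc : ℕ) : ℝ) * ((Nc : ℝ) - (Le : ℝ)) := by
  rw [Finset.sum_comm]
  rw [Finset.sum_congr rfl (fun j _ => Finset.sum_congr rfl
    (fun i _ => by rw [Dn_symm]))]
  exact blockB hNc hLe2

lemma blockD (hNc : Nc < N) :
    ∑ i ∈ Ico Nc N, ∑ j ∈ Ico Nc N, (Dn Nc Le i j : ℝ) =
      ((N - Nc : ℕ) : ℝ) * (((N - Nc : ℕ) : ℝ) - 1) * (((N - Nc : ℕ) : ℝ) + 1) / 3 := by
  have e : ∀ i ∈ Ico Nc N, ∀ j ∈ Ico Nc N, (Dn Nc Le i j : ℝ) =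
      ((max i j - min i j : ℕ) : ℝ) := by
    intro i hi j hj
    rw [mem_Ico] at hi hj
    congr 1
    simp only [Dn]
    split_ifs <;> omega
  rw [Finset.sum_congr rfl (fun i hi => Finset.sum_congr rfl (e i hi))]
  rw [Finset.sum_Ico_eq_sum_range]
  rw [Finset.sum_congr rfl (fun a _ => Finset.sum_Ico_eq_sum_range _ _ _)]
  have e2 : ∀ a ∈ range (N - Nc), ∀ b ∈ range (N - Nc),
      ((max (Nc + a) (Nc + b) - min (Nc + a) (Nc + b) : ℕ) : ℝ) =
        ((max a b - min a b : ℕ) : ℝ) := by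
    intro a _ b _
    congr 1
    omega
  rw [Finset.sum_congr rfl (fun a ha => Finset.sum_congr rfl (e2 a ha))]
  exact sum_absdiff_real (N - Nc)

lemma sum_Dn_total (hNc : Nc < N) (hLe2 : Le ≤ Nc) :
    ∑ i ∈ range N, ∑ j ∈ range N, (Dn Nc Le i j : ℝ) =
      (Nc : ℝ) * ((Nc : ℝ) - 1) +
        2 * ((Nc : ℝ) * (((N - Nc : ℕ) : ℝ) * (((N - Nc : ℕ) : ℝ) + 1) / 2) +
          ((N - Nc : ℕ) : ℝ) * ((Nc : ℝ) - (Le : ℝ))) +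
        ((N - Nc : ℕ) : ℝ) * (((N - Nc : ℕ) : ℝ) - 1) * (((N - Nc : ℕ) : ℝ) + 1) / 3 := by
  have hsplit : ∀ F : ℕ → ℝ, ∑ j ∈ range N, F j =
      ∑ j ∈ Ico 0 Nc, F j + ∑ j ∈ Ico Nc N, F j := by
    intro F
    rw [Finset.range_eq_Ico, ← Finset.sum_Ico_consecutive F (Nat.zero_le Nc) hNc.le]
  rw [hsplit (fun i => ∑ j ∈ range N, (Dn Nc Le i j : ℝ))]
  have h1 : ∑ i ∈ Ico 0 Nc, ∑ j ∈ range N, (Dn Nc Le i j : ℝ) =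
      (∑ i ∈ Ico 0 Nc, ∑ j ∈ Ico 0 Nc, (Dn Nc Le i j : ℝ)) +
        ∑ i ∈ Ico 0 Nc, ∑ j ∈ Ico Nc N, (Dn Nc Le i j : ℝ) := by
    rw [Finset.sum_congr rfl (fun i _ => hsplit _), Finset.sum_add_distrib]
  have h2 : ∑ i ∈ Ico Nc N, ∑ j ∈ range N, (Dn Nc Le i j : ℝ) =
      (∑ i ∈ Ico Nc N, ∑ j ∈ Ico 0 Nc, (Dn Nc Le i j : ℝ)) +
        ∑ i ∈ Ico Nc N, ∑ j ∈ Ico Nc N, (Dn Nc Le i j : ℝ) := by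
    rw [Finset.sum_congr rfl (fun i _ => hsplit _), Finset.sum_add_distrib]
  rw [h1, h2, blockA, blockB hNc hLe2, blockC hNc hLe2, blockD hNc]
  ring

end Blocks

theorem stmt_10 (N Nc Le L : ℕ) (hNc : Nc < N) (hLe1 : 1 ≤ Le) (hLe2 : Le ≤ Nc)
    (hL : L = Nc * (Nc - 1) / 2 + ((N - Nc) - 1) + Le) :
    avgPathLen (ultraLongGraph N Nc Le) =
      (1 / ((N : ℝ) * ((N : ℝ) - 1) / 2)) *
        ((Nc * (Nc - 1) / 2 : ℕ) - ((N - Nc : ℕ) : ℝ) * ((L : ℝ) - (N : ℝ)) +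
          ((N : ℝ) ^ 3 - (Nc : ℝ) ^ 3 - 7 * ((N - Nc : ℕ) : ℝ)) / 6) := by
  classical
  have hdist : ∀ u v : Fin N,
      (((ultraLongGraph N Nc Le).dist u v : ℕ) : ℝ) = ((Dn Nc Le u.val v.val : ℕ) : ℝ) := by
    intro u v
    rw [ulg_dist_eq hNc hLe1 hLe2]
    congr 1
    simp only [Dn, Fin.val_inj]
  have hsub : (Finset.univ.offDiag : Finset (Fin N × Fin N)) ⊆
      Finset.univ ×ˢ Finset.univ := by
    intro p _
    simp [Finset.mem_product]
  have hnum : (∑ p ∈ Finset.univ.offDiag, (((ultraLongGraph N Nc Le).dist p.1 p.2 : ℕ) : ℝ)) =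
      ∑ i ∈ Finset.range N, ∑ j ∈ Finset.range N, ((Dn Nc Le i j : ℕ) : ℝ) := by
    rw [Finset.sum_subset hsub (fun p hmem hnot => by
      have hpp : p.1 = p.2 := by
        simp [Finset.mem_offDiag] at hnot
        exact hnot
      rw [hpp]
      simp [SimpleGraph.dist_self])]
    rw [Finset.sum_product]
    rw [Finset.sum_congr rfl (fun i _ => Finset.sum_congr rfl (fun j _ => hdist i j))]
    rw [Finset.sum_congr rfl (fun i _ =>
      Fin.sum_univ_eq_sum_range (fun j => ((Dn Nc Le i.val j : ℕ) : ℝ)) N)]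
    exact Fin.sum_univ_eq_sum_range (fun i => ∑ j ∈ Finset.range N, ((Dn Nc Le i j : ℕ) : ℝ)) N
  unfold avgPathLen
  rw [hnum, sum_Dn_total hNc hLe2, Fintype.card_fin]
  obtain ⟨nt, hnt⟩ : ∃ nt, N = Nc + nt := ⟨N - Nc, by omega⟩
  subst hnt
  have hnt1 : 1 ≤ nt := by omega
  have hNc1 : 1 ≤ Nc := le_trans hLe1 hLe2
  simp only [Nat.add_sub_cancel_left] at hL ⊢
  have hdvd : 2 ∣ Nc * (Nc - 1) := by
    have h := Nat.even_mul_succ_self (Nc - 1)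
    rw [Nat.sub_add_cancel hNc1] at h
    rw [mul_comm]
    exact h.two_dvd
  have hLc : ((Nc * (Nc - 1) / 2 : ℕ) : ℝ) = (Nc : ℝ) * ((Nc : ℝ) - 1) / 2 := by
    rw [Nat.cast_div hdvd (by norm_num)]
    push_cast [Nat.cast_sub hNc1]
    ring
  have hLr : (L : ℝ) = (Nc : ℝ) * ((Nc : ℝ) - 1) / 2 + ((nt : ℝ) - 1) + (Le : ℝ) := by
    rw [hL]
    push_cast [hLc, Nat.cast_sub hnt1]
    ring
  rw [hLc, hLr]
  have h2 : (2 : ℝ) ≤ ((Nc + nt : ℕ) : ℝ) := by exact_mod_cast (by omega : 2 ≤ Nc + nt)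
  push_cast at h2 ⊢
  have hne1 : (Nc : ℝ) + (nt : ℝ) ≠ 0 := by linarith
  have hne2 : (Nc : ℝ) + (nt : ℝ) - 1 ≠ 0 := by intro h; linarith
  field_simp
  ring
end

section
/- Let G be a directed ring on N vertices augmented with an M-backwards subgraph on its first M vertices (each vertex vᵢ with i ≤ M points to all vⱼ with j < i), where M ≤ N. Then the total pathlength of G equals that of the plain directed ring minus (M(M-1)/2)·(N - (M+4)/3), i.e., the average pathlength is N/2 - (1/L̃₀)·(M(M-1)/2)·(N - (M+4)/3) with L̃₀ = N(N-1). -/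
open Finset

/-- `hasWalkLen A n u v` : there is a directed walk of length `n` from `u` to
`v` along the arc relation `A`. -/
def hasWalkLen {V : Type*} (A : V → V → Prop) : ℕ → V → V → Prop
  | 0, u, v => u = v
  | n + 1, u, v => ∃ w, A u w ∧ hasWalkLen A n w v

/-- Directed shortest-path distance. -/
noncomputable def ddist {V : Type*} (A : V → V → Prop) (u v : V) : ℕ :=
  sInf {n | hasWalkLen A n u v}

/-- A directed ring on `N` vertices (`i → i+1` and `N-1 → 0`) augmented with an
`M`-backwards subgraph on its first `M` vertices: every `vᵢ` with `i < M`
points to every `vⱼ` with `j < i`. -/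
def ringPlusMBS (N M : ℕ) (i j : Fin N) : Prop :=
  j.val = i.val + 1 ∨ (i.val = N - 1 ∧ j.val = 0) ∨ (j.val < i.val ∧ i.val < M)

namespace StmtAux

/-- Explicit distance formula. -/
def f (N M : ℕ) (i j : Fin N) : ℕ :=
  if j.val < i.val ∧ i.val < M then 1
  else if i.val ≤ j.val then j.val - i.val
  else N + j.val - i.val

lemma walk_trans {V : Type*} {A : V → V → Prop} :
    ∀ (m : ℕ) {n : ℕ} {u v w : V}, hasWalkLen A m u v → hasWalkLen A n v w →
      hasWalkLen A (m + n) u w := by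
  intro m
  induction m with
  | zero =>
    intro n u v w h1 h2
    cases h1
    simpa using h2
  | succ m ih =>
    intro n u v w h1 h2
    obtain ⟨x, hx, hwalk⟩ := h1
    have : m + 1 + n = (m + n) + 1 := by omega
    rw [this]
    exact ⟨x, hx, ih hwalk h2⟩

lemma walk_forward {N M : ℕ} :
    ∀ (d : ℕ) (i j : Fin N), j.val = i.val + d →
      hasWalkLen (ringPlusMBS N M) d i j := by
  intro d
  induction d with
  | zero =>
    intro i j h
    exact Fin.ext (by omega)
  | succ d ih =>
    intro i j h
    have hlt : i.val + 1 < N := by omega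
    refine ⟨⟨i.val + 1, hlt⟩, Or.inl rfl, ih _ _ ?_⟩
    simpa using by omega

lemma walk_exists {N M : ℕ} (hN : 2 ≤ N) (i j : Fin N) :
    hasWalkLen (ringPlusMBS N M) (f N M i j) i j := by
  unfold f
  split_ifs with h1 h2
  · exact ⟨j, Or.inr (Or.inr h1), rfl⟩
  · exact walk_forward _ i j (by omega)
  · -- j < i, go forward to N-1, wrap to 0, forward to j
    have hi := i.isLt
    have hj := j.isLt
    set last : Fin N := ⟨N - 1, by omega⟩ with hlast
    set zero : Fin N := ⟨0, by omega⟩ with hzero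
    have w1 : hasWalkLen (ringPlusMBS N M) (N - 1 - i.val) i last :=
      walk_forward _ i last (by simp [hlast]; omega)
    have w2 : hasWalkLen (ringPlusMBS N M) 1 last zero :=
      ⟨zero, Or.inr (Or.inl ⟨rfl, rfl⟩), rfl⟩
    have w3 : hasWalkLen (ringPlusMBS N M) j.val zero j :=
      walk_forward _ zero j (by simp [hzero])
    have := walk_trans _ w1 (walk_trans _ w2 w3)
    have hlen : N - 1 - i.val + (1 + j.val) = N + j.val - i.val := by omega
    rwa [hlen] at this

lemma f_le_succ {N M : ℕ} (hM : M ≤ N) {i w : Fin N}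
    (ha : ringPlusMBS N M i w) (j : Fin N) :
    f N M i j ≤ f N M w j + 1 := by
  have hi := i.isLt
  have hj := j.isLt
  have hw := w.isLt
  unfold f
  rcases ha with h | ⟨h1, h2⟩ | ⟨h1, h2⟩ <;> split_ifs <;> omega

lemma walk_ge {N M : ℕ} (hM : M ≤ N) :
    ∀ (n : ℕ) (i j : Fin N), hasWalkLen (ringPlusMBS N M) n i j →
      f N M i j ≤ n := by
  intro n
  induction n with
  | zero =>
    intro i j h
    cases h
    unfold f
    split_ifs <;> omega
  | succ n ih =>
    intro i j h
    obtain ⟨w, hw, hwalk⟩ := h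
    calc f N M i j ≤ f N M w j + 1 := f_le_succ hM hw j
      _ ≤ n + 1 := by have := ih w j hwalk; omega

lemma ddist_eq {N M : ℕ} (hN : 2 ≤ N) (hM : M ≤ N) (i j : Fin N) :
    ddist (ringPlusMBS N M) i j = f N M i j := by
  refine le_antisymm (Nat.sInf_le (walk_exists hN i j)) ?_
  exact le_csInf ⟨_, walk_exists hN i j⟩ fun n hn => walk_ge hM n i j hn

/-- real-valued plain ring distance, in terms of values -/
noncomputable def rreal (N a b : ℕ) : ℝ :=
  if a ≤ b then (b : ℝ) - a else (N : ℝ) + b - a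

/-- real-valued reduction -/
noncomputable def redreal (N M a b : ℕ) : ℝ :=
  if b < a ∧ a < M then (N : ℝ) - 1 - a + b else 0

lemma f_self {N M : ℕ} (i : Fin N) : f N M i i = 0 := by
  unfold f
  rw [if_neg (by omega), if_pos le_rfl]
  omega

lemma f_cast {N M : ℕ} (i j : Fin N) :
    (f N M i j : ℝ) = rreal N i.val j.val - redreal N M i.val j.val := by
  have hi := i.isLt
  unfold f rreal redreal
  by_cases h1 : j.val < i.val ∧ i.val < M
  · rw [if_pos h1, if_pos h1, if_neg (by omega)]
    push_cast; ring
  · rw [if_neg h1, if_neg h1]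
    by_cases h2 : i.val ≤ j.val
    · rw [if_pos h2, if_pos h2, Nat.cast_sub h2]; ring
    · rw [if_neg h2, if_neg h2,
        Nat.cast_sub (by omega : i.val ≤ N + j.val)]
      push_cast; ring

lemma sum_id_real : ∀ n : ℕ, ∑ j ∈ Finset.range n, (j : ℝ) = n * ((n : ℝ) - 1) / 2 := by
  intro n
  induction n with
  | zero => simp
  | succ n ih =>
    rw [Finset.sum_range_succ, ih]
    push_cast
    ring

lemma ring_sum {N : ℕ} (hN : 2 ≤ N) :
    ∑ i : Fin N, ∑ j : Fin N, rreal N i.val j.val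
      = N * ((N : ℝ) * ((N : ℝ) - 1) / 2) := by
  haveI : NeZero N := ⟨by omega⟩
  have key : ∀ i : Fin N, ∑ j : Fin N, rreal N i.val j.val
      = (N : ℝ) * ((N : ℝ) - 1) / 2 := by
    intro i
    have hre : ∑ j : Fin N, rreal N i.val j.val
        = ∑ k : Fin N, rreal N i.val ((i + k).val) := by
      exact (Fintype.sum_equiv (Equiv.addLeft i) _ _ (fun k => rfl)).symm
    rw [hre]
    have step : ∀ k : Fin N, rreal N i.val ((i + k).val) = (k.val : ℝ) := by
      intro k
      have hi := i.isLt
      have hk := k.isLt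
      have hv : (i + k).val = (i.val + k.val) % N := Fin.val_add i k
      unfold rreal
      by_cases hc : i.val + k.val < N
      · rw [hv, Nat.mod_eq_of_lt hc, if_pos (by omega)]
        push_cast; ring
      · have h1 : (i.val + k.val) % N = i.val + k.val - N := by
          rw [Nat.mod_eq_sub_mod (by omega), Nat.mod_eq_of_lt (by omega)]
        rw [hv, h1, if_neg (by omega)]
        rw [Nat.cast_sub (by omega)]
        push_cast; ring
    rw [Finset.sum_congr rfl (fun k _ => step k)]
    rw [Fin.sum_univ_eq_sum_range (fun k => (k : ℝ)), sum_id_real]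
  rw [Finset.sum_congr rfl (fun i _ => key i), Finset.sum_const,
    Finset.card_univ, Fintype.card_fin, nsmul_eq_mul]

lemma tri_sum {N : ℕ} : ∀ m : ℕ,
    ∑ i ∈ Finset.range m, ∑ j ∈ Finset.range i, ((N : ℝ) - 1 - i + j)
      = (m : ℝ) * ((m : ℝ) - 1) / 2 * ((N : ℝ) - ((m : ℝ) + 4) / 3) := by
  intro m
  induction m with
  | zero => simp
  | succ m ih =>
    rw [Finset.sum_range_succ, ih]
    have hinner : ∑ j ∈ Finset.range m, ((N : ℝ) - 1 - m + j)
        = m * ((N : ℝ) - 1 - m) + m * ((m : ℝ) - 1) / 2 := by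
      rw [Finset.sum_add_distrib, Finset.sum_const, Finset.card_range,
        sum_id_real, nsmul_eq_mul]
    rw [hinner]
    push_cast
    ring

lemma red_sum {N M : ℕ} (hM : M ≤ N) :
    ∑ i : Fin N, ∑ j : Fin N, redreal N M i.val j.val
      = (M : ℝ) * ((M : ℝ) - 1) / 2 * ((N : ℝ) - ((M : ℝ) + 4) / 3) := by
  have hr : ∑ i : Fin N, ∑ j : Fin N, redreal N M i.val j.val
      = ∑ i ∈ Finset.range N, ∑ j ∈ Finset.range N, redreal N M i j := by
    rw [Fin.sum_univ_eq_sum_range (fun a => ∑ j : Fin N, redreal N M a j)]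
    exact Finset.sum_congr rfl fun i _ =>
      Fin.sum_univ_eq_sum_range (fun b => redreal N M i b) N
  rw [hr]
  have inner : ∀ i, i < M → ∑ j ∈ Finset.range N, redreal N M i j
      = ∑ j ∈ Finset.range i, ((N : ℝ) - 1 - i + j) := by
    intro i hiM
    have hfil : (Finset.range N).filter (fun j => j < i) = Finset.range i := by
      ext j
      simp only [Finset.mem_filter, Finset.mem_range]
      omega
    rw [← hfil, Finset.sum_filter]
    refine Finset.sum_congr rfl fun j _ => ?_
    unfold redreal
    split_ifs <;> first | rfl | omega
  have outer : ∑ i ∈ Finset.range N, ∑ j ∈ Finset.range N, redreal N M i j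
      = ∑ i ∈ Finset.range M, ∑ j ∈ Finset.range i, ((N : ℝ) - 1 - i + j) := by
    have hfil : (Finset.range N).filter (fun i => i < M) = Finset.range M := by
      ext i
      simp only [Finset.mem_filter, Finset.mem_range]
      omega
    rw [← hfil, Finset.sum_filter]
    refine Finset.sum_congr rfl fun i _ => ?_
    by_cases hiM : i < M
    · rw [if_pos hiM, inner i hiM]
    · rw [if_neg hiM]
      refine Finset.sum_eq_zero fun j _ => ?_
      unfold redreal
      rw [if_neg (by omega)]
  rw [outer, tri_sum]

end StmtAux

/-- The average pathlength of a directed ring with an `M`-backwards subgraph: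
`N/2 - (1/L̃₀)·(M(M-1)/2)·(N - (M+4)/3)`, with `L̃₀ = N(N-1)`. -/
theorem stmt_15 (N M : ℕ) (hN : 2 ≤ N) (hM : M ≤ N) :
    (∑ p ∈ Finset.univ.offDiag, (ddist (ringPlusMBS N M) p.1 p.2 : ℝ)) /
        ((N : ℝ) * ((N : ℝ) - 1)) =
      (N : ℝ) / 2 -
        (1 / ((N : ℝ) * ((N : ℝ) - 1))) *
          ((M : ℝ) * ((M : ℝ) - 1) / 2) * ((N : ℝ) - ((M : ℝ) + 4) / 3) := by
  classical
  have hS : (∑ p ∈ Finset.univ.offDiag, (ddist (ringPlusMBS N M) p.1 p.2 : ℝ))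
      = ∑ p ∈ (Finset.univ : Finset (Fin N)) ×ˢ (Finset.univ : Finset (Fin N)),
          (StmtAux.f N M p.1 p.2 : ℝ) := by
    have h1 : ∀ p ∈ (Finset.univ : Finset (Fin N)).offDiag,
        ((ddist (ringPlusMBS N M) p.1 p.2 : ℕ) : ℝ) = (StmtAux.f N M p.1 p.2 : ℝ) := by
      intro p _
      rw [StmtAux.ddist_eq hN hM]
    rw [Finset.sum_congr rfl h1]
    refine Finset.sum_subset ?_ ?_
    · intro p hp
      simp [Finset.mem_product]
    · intro p _ hp
      have : p.1 = p.2 := by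
        by_contra hne
        exact hp (by simp [Finset.mem_offDiag, hne])
      rw [this, StmtAux.f_self]
      simp
  rw [hS, Finset.sum_product]
  have hpt : ∀ i j : Fin N, (StmtAux.f N M i j : ℝ)
      = StmtAux.rreal N i.val j.val - StmtAux.redreal N M i.val j.val :=
    fun i j => StmtAux.f_cast i j
  have : ∑ i : Fin N, ∑ j : Fin N, (StmtAux.f N M i j : ℝ)
      = N * ((N : ℝ) * ((N : ℝ) - 1) / 2)
        - (M : ℝ) * ((M : ℝ) - 1) / 2 * ((N : ℝ) - ((M : ℝ) + 4) / 3) := by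
    calc ∑ i : Fin N, ∑ j : Fin N, (StmtAux.f N M i j : ℝ)
        = ∑ i : Fin N, ∑ j : Fin N,
            (StmtAux.rreal N i.val j.val - StmtAux.redreal N M i.val j.val) := by
          exact Finset.sum_congr rfl fun i _ =>
            Finset.sum_congr rfl fun j _ => hpt i j
      _ = (∑ i : Fin N, ∑ j : Fin N, StmtAux.rreal N i.val j.val)
            - ∑ i : Fin N, ∑ j : Fin N, StmtAux.redreal N M i.val j.val := by
          rw [← Finset.sum_sub_distrib]
          exact Finset.sum_congr rfl fun i _ => Finset.sum_sub_distrib _ _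
      _ = _ := by rw [StmtAux.ring_sum hN, StmtAux.red_sum hM]
  rw [this]
  have hN0 : (N : ℝ) ≠ 0 := by positivity
  have hN1 : (N : ℝ) - 1 ≠ 0 := by
    have : (2 : ℝ) ≤ N := by exact_mod_cast hN
    nlinarith
  field_simp
end
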